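/- Let P be a Markov kernel on a measurable space Z satisfying the super-Lyapunov drift condition: there are constants c > 0, b ≥ 1, δ ∈ (1/2, 1], R₀ ≥ 0 and a measurable function V : Z → [e, ∞) such that, setting W = log V, for every z ∈ Z one has PV(z) ≤ exp(−c W(z)^δ) V(z) if W(z) > R₀, and PV(z) ≤ b if W(z) ≤ R₀. Then for every γ with 0 < γ ≤ δ and every z ∈ Z: P(W^{γ+1−δ})(z) ≤ W(z)^{γ+1−δ} − c_γ W(z)^{γ} + b_γ · 1{W(z) ≤ R₀}, where c_γ = min(1, (γ+1−δ)c) and b_γ = (log b)^{γ+1−δ}. -/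

import Mathlib

open MeasureTheory ProbabilityTheory

private lemma jensen_key {Z : Type*} [MeasurableSpace Z] (μ : Measure Z)
    [IsProbabilityMeasure μ]
    (V : Z → ℝ) (hVmeas : Measurable V) (hVe : ∀ y, Real.exp 1 ≤ V y)
    (α : ℝ) (hα0 : 0 < α) (hα1 : α ≤ 1)
    (K : ℝ) (hK : ∫⁻ y, ENNReal.ofReal (V y) ∂μ ≤ ENNReal.ofReal K) :
    Real.exp 1 ≤ K ∧
      ∫⁻ y, ENNReal.ofReal (Real.log (V y) ^ α) ∂μ ≤ ENNReal.ofReal (Real.log K ^ α) := by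
  have hV0 : ∀ y, 0 < V y := fun y => lt_of_lt_of_le (Real.exp_pos 1) (hVe y)
  have hW1 : ∀ y, 1 ≤ Real.log (V y) := fun y => by
    calc (1 : ℝ) = Real.log (Real.exp 1) := (Real.log_exp 1).symm
      _ ≤ Real.log (V y) := Real.log_le_log (Real.exp_pos 1) (hVe y)
  have hWV : ∀ y, Real.log (V y) ≤ V y := fun y => by
    have := Real.log_le_sub_one_of_pos (hV0 y); linarith
  have hVint : Integrable V μ := by
    refine ⟨hVmeas.aestronglyMeasurable, ?_⟩
    rw [hasFiniteIntegral_iff_ofReal (Filter.Eventually.of_forall fun y => (hV0 y).le)]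
    exact lt_of_le_of_lt hK ENNReal.ofReal_lt_top
  have heI : Real.exp 1 ≤ ∫ y, V y ∂μ := by
    have h := integral_mono (integrable_const (Real.exp 1)) hVint hVe
    simpa using h
  have hI0 : 0 < ∫ y, V y ∂μ := lt_of_lt_of_le (Real.exp_pos 1) heI
  have h1 : ENNReal.ofReal (∫ y, V y ∂μ) ≤ ENNReal.ofReal K := by
    rw [ofReal_integral_eq_lintegral_ofReal hVint
      (Filter.Eventually.of_forall fun y => (hV0 y).le)]
    exact hK
  have hK0 : 0 ≤ K := by
    by_contra hneg
    push_neg at hneg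
    have h2 : ENNReal.ofReal (∫ y, V y ∂μ) = 0 :=
      le_antisymm (by simpa [ENNReal.ofReal_eq_zero.2 hneg.le] using h1) zero_le
    rw [ENNReal.ofReal_eq_zero] at h2
    linarith
  have hIK : ∫ y, V y ∂μ ≤ K := (ENNReal.ofReal_le_ofReal_iff hK0).1 h1
  have heK : Real.exp 1 ≤ K := heI.trans hIK
  have hWint : Integrable (fun y => Real.log (V y)) μ := by
    refine hVint.mono' (hVmeas.log.aestronglyMeasurable) ?_
    filter_upwards with y
    rw [Real.norm_eq_abs, abs_of_nonneg (by linarith [hW1 y])]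
    exact hWV y
  have hWaint : Integrable (fun y => Real.log (V y) ^ α) μ := by
    refine hVint.mono' ((hVmeas.log.pow_const α).aestronglyMeasurable) ?_
    filter_upwards with y
    rw [Real.norm_eq_abs, abs_of_nonneg (Real.rpow_nonneg (by linarith [hW1 y]) α)]
    calc Real.log (V y) ^ α ≤ Real.log (V y) ^ (1 : ℝ) :=
          Real.rpow_le_rpow_of_exponent_le (hW1 y) hα1
      _ = Real.log (V y) := Real.rpow_one _
      _ ≤ V y := hWV y
  have hlog_concave : ConcaveOn ℝ (Set.Ici (Real.exp 1)) Real.log :=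
    (strictConcaveOn_log_Ioi.concaveOn).subset
      (fun x hx => lt_of_lt_of_le (Real.exp_pos 1) hx) (convex_Ici _)
  have hlogcont : ContinuousOn Real.log (Set.Ici (Real.exp 1)) :=
    Real.continuousOn_log.mono (fun x hx => by
      simp only [Set.mem_compl_iff, Set.mem_singleton_iff]
      exact ne_of_gt (lt_of_lt_of_le (Real.exp_pos 1) hx))
  have hJ1 : ∫ y, Real.log (V y) ∂μ ≤ Real.log (∫ y, V y ∂μ) :=
    hlog_concave.le_map_integral hlogcont isClosed_Ici
      (Filter.Eventually.of_forall fun y => hVe y) hVint hWint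
  have hrpow_concave : ConcaveOn ℝ (Set.Ici 0) (fun x : ℝ => x ^ α) :=
    Real.concaveOn_rpow hα0.le hα1
  have hrcont : ContinuousOn (fun x : ℝ => x ^ α) (Set.Ici 0) := fun x _ =>
    (Real.continuousAt_rpow_const x α (Or.inr hα0.le)).continuousWithinAt
  have hJ2 : ∫ y, Real.log (V y) ^ α ∂μ ≤ (∫ y, Real.log (V y) ∂μ) ^ α :=
    hrpow_concave.le_map_integral hrcont isClosed_Ici
      (Filter.Eventually.of_forall fun y => le_trans zero_le_one (hW1 y)) hWint hWaint
  have hchain : ∫ y, Real.log (V y) ^ α ∂μ ≤ Real.log K ^ α := by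
    refine hJ2.trans ?_
    refine Real.rpow_le_rpow (integral_nonneg fun y => zero_le_one.trans (hW1 y)) ?_ hα0.le
    exact hJ1.trans (Real.log_le_log hI0 hIK)
  refine ⟨heK, ?_⟩
  rw [← ofReal_integral_eq_lintegral_ofReal hWaint
    (Filter.Eventually.of_forall fun y => Real.rpow_nonneg (by linarith [hW1 y]) α)]
  exact ENNReal.ofReal_le_ofReal hchain

/-- Under the super-Lyapunov drift condition, for `0 < γ ≤ δ`,
`P(W^{γ+1−δ})(z) ≤ W(z)^{γ+1−δ} − c_γ W(z)^γ + b_γ 1{W(z) ≤ R₀}` with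
`c_γ = min(1, (γ+1−δ)c)` and `b_γ = (log b)^{γ+1−δ}`. -/
theorem polynomial_drift_from_super_lyapunov {Z : Type*} [MeasurableSpace Z]
    (P : Kernel Z Z) [IsMarkovKernel P]
    (V : Z → ℝ) (hVmeas : Measurable V) (hVe : ∀ z, Real.exp 1 ≤ V z)
    (c b δ R₀ : ℝ) (hc : 0 < c) (hb : 1 ≤ b)
    (hδ1 : 1 / 2 < δ) (hδ2 : δ ≤ 1) (hR₀ : 0 ≤ R₀)
    (W : Z → ℝ) (hW : W = fun z => Real.log (V z))
    (hdrift₁ : ∀ z, R₀ < W z →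
      ∫⁻ y, ENNReal.ofReal (V y) ∂(P z) ≤
        ENNReal.ofReal (Real.exp (-c * W z ^ δ) * V z))
    (hdrift₂ : ∀ z, W z ≤ R₀ → ∫⁻ y, ENNReal.ofReal (V y) ∂(P z) ≤ ENNReal.ofReal b)
    (γ : ℝ) (hγ0 : 0 < γ) (hγδ : γ ≤ δ) :
    ∀ z : Z,
      ∫⁻ y, ENNReal.ofReal (W y ^ (γ + 1 - δ)) ∂(P z) ≤
        ENNReal.ofReal
          (W z ^ (γ + 1 - δ) - min 1 ((γ + 1 - δ) * c) * W z ^ γ +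
            Real.log b ^ (γ + 1 - δ) * (if W z ≤ R₀ then 1 else 0)) := by
  subst hW
  intro z
  set α := γ + 1 - δ with hα
  have hα0 : 0 < α := by simp only [hα]; linarith
  have hα1 : α ≤ 1 := by simp only [hα]; linarith
  have hV0z : 0 < V z := lt_of_lt_of_le (Real.exp_pos 1) (hVe z)
  have hw1 : 1 ≤ Real.log (V z) := by
    calc (1 : ℝ) = Real.log (Real.exp 1) := (Real.log_exp 1).symm
      _ ≤ Real.log (V z) := Real.log_le_log (Real.exp_pos 1) (hVe z)
  by_cases hzR : Real.log (V z) ≤ R₀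
  · obtain ⟨heK, hkey⟩ := jensen_key (P z) V hVmeas hVe α hα0 hα1 b (hdrift₂ z hzR)
    refine hkey.trans (ENNReal.ofReal_le_ofReal ?_)
    simp only [if_pos hzR, mul_one]
    have h1 : min 1 (α * c) * Real.log (V z) ^ γ ≤ Real.log (V z) ^ α := by
      calc min 1 (α * c) * Real.log (V z) ^ γ ≤ 1 * Real.log (V z) ^ γ :=
            mul_le_mul_of_nonneg_right (min_le_left _ _)
              (Real.rpow_nonneg (by linarith) γ)
        _ = Real.log (V z) ^ γ := one_mul _
        _ ≤ Real.log (V z) ^ α := Real.rpow_le_rpow_of_exponent_le hw1 (by simp only [hα]; linarith)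
    linarith
  · push_neg at hzR
    obtain ⟨heK, hkey⟩ := jensen_key (P z) V hVmeas hVe α hα0 hα1 _ (hdrift₁ z hzR)
    refine hkey.trans (ENNReal.ofReal_le_ofReal ?_)
    simp only [if_neg (not_le.2 hzR), mul_zero, add_zero]
    set w := Real.log (V z) with hwdef
    have hw0 : (0 : ℝ) < w := by linarith
    have hlogK : Real.log (Real.exp (-c * w ^ δ) * V z) = w - c * w ^ δ := by
      rw [Real.log_mul (Real.exp_ne_zero _) (ne_of_gt hV0z), Real.log_exp]
      ring
    rw [hlogK]
    have hs1 : 1 ≤ w - c * w ^ δ := by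
      calc (1 : ℝ) = Real.log (Real.exp 1) := (Real.log_exp 1).symm
        _ ≤ Real.log (Real.exp (-c * w ^ δ) * V z) := Real.log_le_log (Real.exp_pos 1) heK
        _ = w - c * w ^ δ := hlogK
    have hwd : w ^ δ = w * w ^ (δ - 1) := by
      calc w ^ δ = w ^ ((1 : ℝ) + (δ - 1)) := by ring_nf
        _ = w ^ (1 : ℝ) * w ^ (δ - 1) := Real.rpow_add hw0 1 (δ - 1)
        _ = w * w ^ (δ - 1) := by rw [Real.rpow_one]
    set t := c * w ^ (δ - 1) with ht
    have ht0 : 0 ≤ t := mul_nonneg hc.le (Real.rpow_nonneg hw0.le _)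
    have hst : w - c * w ^ δ = w * (1 - t) := by rw [hwd, ht]; ring
    have ht1 : 0 ≤ 1 - t := by
      have h2 : (0 : ℝ) < w * (1 - t) := by rw [← hst]; linarith
      nlinarith
    have hber : (1 - t) ^ α ≤ 1 - α * t := by
      have h3 := Real.geom_mean_le_arith_mean2_weighted hα0.le
        (by linarith : (0 : ℝ) ≤ 1 - α) ht1 zero_le_one (by ring)
      rw [Real.one_rpow, mul_one] at h3
      linarith
    have hwt : w ^ α * t = c * w ^ γ := by
      rw [ht]
      calc w ^ α * (c * w ^ (δ - 1)) = c * (w ^ α * w ^ (δ - 1)) := by ring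
        _ = c * w ^ (α + (δ - 1)) := by rw [← Real.rpow_add hw0]
        _ = c * w ^ γ := by rw [show α + (δ - 1) = γ by simp only [hα]; ring]
    have hmin : min 1 (α * c) * w ^ γ ≤ α * (c * w ^ γ) := by
      have h4 : min 1 (α * c) ≤ α * c := min_le_right _ _
      have h5 : 0 ≤ w ^ γ := Real.rpow_nonneg hw0.le γ
      nlinarith
    calc (w - c * w ^ δ) ^ α = (w * (1 - t)) ^ α := by rw [hst]
      _ = w ^ α * (1 - t) ^ α := Real.mul_rpow hw0.le ht1
      _ ≤ w ^ α * (1 - α * t) :=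
          mul_le_mul_of_nonneg_left hber (Real.rpow_nonneg hw0.le _)
      _ = w ^ α - α * (w ^ α * t) := by ring
      _ = w ^ α - α * (c * w ^ γ) := by rw [hwt]
      _ ≤ w ^ α - min 1 (α * c) * w ^ γ := by linarith
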